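/- Let f : finite sets of nodes → ℝ be monotone and submodular with f(∅) = 0, let S_{i−1} be any set, and let OPT = max over size-k sets S of f(S). If v_i maximizes the marginal gain y(v) = f(S_{i−1} ∪ {v}) − f(S_{i−1}), then y(v_i) ≥ (OPT − f(S_{i−1}))/k. -/
import Mathlib


/-- Key single-step inequality of the greedy analysis: for a monotone submodular `f` with
`f ∅ = 0`, if `OPT` is the maximum of `f` over size-`k` sets and `vi` maximizes the marginal
gain over the current set `T`, then the marginal gain of `vi` is at least `(OPT - f T)/k`. -/
theorem submodular_greedy_marginal_gain
    {V : Type*} [DecidableEq V] [Fintype V]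
    (f : Finset V → ℝ) (k : ℕ) (hk : 1 ≤ k)
    (hmono : ∀ A B : Finset V, A ⊆ B → f A ≤ f B)
    (hf0 : f ∅ = 0)
    (hsub : ∀ (A B : Finset V) (v : V), A ⊆ B →
      f (insert v B) - f B ≤ f (insert v A) - f A)
    (T : Finset V) (OPT : ℝ)
    (hOPT : IsGreatest (f '' {S : Finset V | S.card = k}) OPT)
    (vi : V)
    (hvi : ∀ v : V, f (insert v T) - f T ≤ f (insert vi T) - f T) :
    (OPT - f T) / (k:ℝ) ≤ f (insert vi T) - f T := by
  set y := f (insert vi T) - f T with hy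
  have hy0 : 0 ≤ y := by
    have := hmono T (insert vi T) (Finset.subset_insert _ _)
    linarith
  have key : ∀ S : Finset V, f (S ∪ T) ≤ f T + S.card * y := by
    intro S
    induction S using Finset.induction_on with
    | empty => simp
    | @insert a S ha ih =>
      have h1 : f (insert a (S ∪ T)) - f (S ∪ T) ≤ f (insert a T) - f T :=
        hsub T (S ∪ T) a (Finset.subset_union_right)
      have h2 : f (insert a T) - f T ≤ y := hvi a
      have hcard : ((insert a S).card : ℝ) = S.card + 1 := by
        rw [Finset.card_insert_of_notMem ha]; push_cast; ring
      have : f (insert a S ∪ T) = f (insert a (S ∪ T)) := by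
        rw [Finset.insert_union]
      rw [this, hcard]
      nlinarith
  obtain ⟨⟨S, hScard, hSf⟩, _⟩ := hOPT
  have hScard' : S.card = k := hScard
  have h1 : OPT ≤ f (S ∪ T) := by
    rw [← hSf]; exact hmono S (S ∪ T) Finset.subset_union_left
  have h2 := key S
  rw [hScard'] at h2
  have hkpos : (0:ℝ) < k := by exact_mod_cast hk
  rw [div_le_iff₀ hkpos]
  nlinarith
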